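/- Define recursively V₁ = C ∈ ℝ^{l×n}, T₁ = 0 ∈ ℝ^{l×m}, and for t ≥ 1, letting d_t and e_t be the numbers of rows and columns of V_t and T_t respectively (so d_1 = l, e_1 = m, d_{t+1} = l + r·d_t, e_{t+1} = m + r·e_t), set V_{t+1} = [C ; (V_t ⊗ I_r)A] ∈ ℝ^{d_{t+1}×n} and T_{t+1} = [[0_{l×m}, 0_{l×r e_t}],[(V_t ⊗ I_r)B, T_t ⊗ I_r]] ∈ ℝ^{d_{t+1}×e_{t+1}}. Then for every t ≥ 1 the fixed point iterate satisfies X_t = V_tᵀ(I_{d_t} + T_t T_tᵀ)⁻¹V_t (Toeplitz-structure closed form of the fixed point iterates for SDAREs). -/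

import Mathlib

open Matrix
open scoped Kronecker
lemma posDef_one_add_mul_transpose {ι κ : Type*} [Fintype ι] [Fintype κ] [DecidableEq ι]
    (A : Matrix ι κ ℝ) : (1 + A * Aᵀ).PosDef := by
  have h := Matrix.posSemidef_self_mul_conjTranspose A
  rw [Matrix.conjTranspose_eq_transpose_of_trivial] at h
  exact Matrix.PosDef.add_posSemidef Matrix.PosDef.one h

open scoped MatrixOrder in
lemma isUnit_det_one_add_mul_posSemidef {ι κ : Type*} [Fintype ι] [Fintype κ]
    [DecidableEq ι] [DecidableEq κ]
    (B : Matrix ι κ ℝ) (S : Matrix ι ι ℝ) (hS : S.PosSemidef) :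
    IsUnit (1 + B * Bᵀ * S).det := by
  set R := CFC.sqrt S with hRdef
  have hRR : R * R = S := CFC.sqrt_mul_sqrt_self S hS.nonneg
  have hRsym : Rᵀ = R := by
    rw [← Matrix.conjTranspose_eq_transpose_of_trivial]
    exact (CFC.sqrt_nonneg S).posSemidef.1
  have key : (1 + B * Bᵀ * S).det = (1 + (R * B) * (R * B)ᵀ).det := by
    rw [← hRR, Matrix.transpose_mul, hRsym, show B * Bᵀ * (R * R) = (B * Bᵀ * R) * R by
      simp only [Matrix.mul_assoc], Matrix.det_one_add_mul_comm]
    congr 1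
    simp only [Matrix.mul_assoc]
  rw [key]
  exact (posDef_one_add_mul_transpose (R * B)).det_pos.ne'.isUnit

lemma pushthrough {ι κ μ : Type*} [Fintype ι] [Fintype κ] [Fintype μ]
    [DecidableEq ι] [DecidableEq κ]
    (K : Matrix ι ι ℝ) (W : Matrix ι κ ℝ) (B : Matrix κ μ ℝ)
    (hK : IsUnit K.det) (hM : IsUnit (K + W * B * Bᵀ * Wᵀ).det)
    (hN : IsUnit (1 + B * Bᵀ * (Wᵀ * K⁻¹ * W)).det) :
    Wᵀ * K⁻¹ * W * (1 + B * Bᵀ * (Wᵀ * K⁻¹ * W))⁻¹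
      = Wᵀ * (K + W * B * Bᵀ * Wᵀ)⁻¹ * W := by
  set M := K + W * B * Bᵀ * Wᵀ with hMdef
  set N := 1 + B * Bᵀ * (Wᵀ * K⁻¹ * W) with hNdef
  have key : M * (K⁻¹ * W) = W * N := by
    rw [hMdef, hNdef, Matrix.add_mul, Matrix.mul_add, Matrix.mul_one, ← Matrix.mul_assoc,
      Matrix.mul_nonsing_inv K hK, Matrix.one_mul]
    congr 1
    simp only [Matrix.mul_assoc]
  have h2 : K⁻¹ * W = M⁻¹ * (W * N) := by
    rw [← key, ← Matrix.mul_assoc, Matrix.nonsing_inv_mul M hM, Matrix.one_mul]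
  calc Wᵀ * K⁻¹ * W * N⁻¹ = Wᵀ * ((K⁻¹ * W) * N⁻¹) := by simp only [Matrix.mul_assoc]
    _ = Wᵀ * (M⁻¹ * (W * (N * N⁻¹))) := by rw [h2]; simp only [Matrix.mul_assoc]
    _ = Wᵀ * M⁻¹ * W := by rw [Matrix.mul_nonsing_inv N hN, Matrix.mul_one, Matrix.mul_assoc]
noncomputable def Dop {n m l r : ℕ}
    (A : Matrix (Fin n × Fin r) (Fin n) ℝ)
    (B : Matrix (Fin n × Fin r) (Fin m) ℝ)
    (C : Matrix (Fin l) (Fin n) ℝ)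
    (X : Matrix (Fin n) (Fin n) ℝ) : Matrix (Fin n) (Fin n) ℝ :=
  Aᵀ * (X ⊗ₖ (1 : Matrix (Fin r) (Fin r) ℝ)) *
      (1 + B * Bᵀ * (X ⊗ₖ (1 : Matrix (Fin r) (Fin r) ℝ)))⁻¹ * A + Cᵀ * C

/-- Row index type of `V_t` (size `d_t = l (r^t - 1)/(r - 1)`); `RIdx l r t` indexes `V_{t+1}`. -/
@[reducible] def RIdx (l r : ℕ) : ℕ → Type
  | 0 => Fin l
  | t + 1 => Fin l ⊕ (RIdx l r t × Fin r)

/-- Column index type of `T_t` (size `e_t`); `CIdx m r t` indexes the columns of `T_{t+1}`. -/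
@[reducible] def CIdx (m r : ℕ) : ℕ → Type
  | 0 => Fin m
  | t + 1 => Fin m ⊕ (CIdx m r t × Fin r)

instance RIdx.fintype (l r : ℕ) : ∀ t, Fintype (RIdx l r t)
  | 0 => inferInstanceAs (Fintype (Fin l))
  | t + 1 => letI := RIdx.fintype l r t
      inferInstanceAs (Fintype (Fin l ⊕ (RIdx l r t × Fin r)))

instance RIdx.decEq (l r : ℕ) : ∀ t, DecidableEq (RIdx l r t)
  | 0 => inferInstanceAs (DecidableEq (Fin l))
  | t + 1 => letI := RIdx.decEq l r t
      inferInstanceAs (DecidableEq (Fin l ⊕ (RIdx l r t × Fin r)))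

instance CIdx.fintype (m r : ℕ) : ∀ t, Fintype (CIdx m r t)
  | 0 => inferInstanceAs (Fintype (Fin m))
  | t + 1 => letI := CIdx.fintype m r t
      inferInstanceAs (Fintype (Fin m ⊕ (CIdx m r t × Fin r)))

instance CIdx.decEq (m r : ℕ) : ∀ t, DecidableEq (CIdx m r t)
  | 0 => inferInstanceAs (DecidableEq (Fin m))
  | t + 1 => letI := CIdx.decEq m r t
      inferInstanceAs (DecidableEq (Fin m ⊕ (CIdx m r t × Fin r)))

/-- `Vseq A C t` is the matrix `V_{t+1}` of the paper: `V₁ = C`,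
`V_{t+1} = [C ; (V_t ⊗ I_r) A]`. -/
noncomputable def Vseq {n l r : ℕ}
    (A : Matrix (Fin n × Fin r) (Fin n) ℝ)
    (C : Matrix (Fin l) (Fin n) ℝ) : (t : ℕ) → Matrix (RIdx l r t) (Fin n) ℝ
  | 0 => C
  | t + 1 => Matrix.fromRows C ((Vseq A C t ⊗ₖ (1 : Matrix (Fin r) (Fin r) ℝ)) * A)

/-- `Tseq A B C t` is the matrix `T_{t+1}` of the paper: `T₁ = 0`,
`T_{t+1} = [[0, 0], [(V_t ⊗ I_r) B, T_t ⊗ I_r]]`. -/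
noncomputable def Tseq {n m l r : ℕ}
    (A : Matrix (Fin n × Fin r) (Fin n) ℝ)
    (B : Matrix (Fin n × Fin r) (Fin m) ℝ)
    (C : Matrix (Fin l) (Fin n) ℝ) : (t : ℕ) → Matrix (RIdx l r t) (CIdx m r t) ℝ
  | 0 => 0
  | t + 1 => Matrix.fromBlocks (0 : Matrix (Fin l) (Fin m) ℝ)
      (0 : Matrix (Fin l) (CIdx m r t × Fin r) ℝ)
      ((Vseq A C t ⊗ₖ (1 : Matrix (Fin r) (Fin r) ℝ)) * B)
      (Tseq A B C t ⊗ₖ (1 : Matrix (Fin r) (Fin r) ℝ))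

theorem stmt7 {n m l r : ℕ} (hn : 0 < n) (hm : 0 < m) (hl : 0 < l) (hr : 0 < r)
    (A : Matrix (Fin n × Fin r) (Fin n) ℝ)
    (B : Matrix (Fin n × Fin r) (Fin m) ℝ)
    (C : Matrix (Fin l) (Fin n) ℝ)
    (Xseq : ℕ → Matrix (Fin n) (Fin n) ℝ)
    (h0 : Xseq 0 = 0)
    (hstep : ∀ t, Xseq (t + 1) = Dop A B C (Xseq t)) :
    ∀ t : ℕ, Xseq (t + 1) =
      (Vseq A C t)ᵀ * (1 + Tseq A B C t * (Tseq A B C t)ᵀ)⁻¹ * Vseq A C t := by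
  intro t
  induction t with
  | zero =>
      rw [hstep 0, h0]
      simp [Dop, Vseq, Tseq, Matrix.zero_kronecker, inv_one]
  | succ t IH =>
      rw [hstep (t + 1), IH]
      set V := Vseq A C t with hV
      set T := Tseq A B C t with hT
      set G : Matrix (RIdx l r t) (RIdx l r t) ℝ := 1 + T * Tᵀ with hG
      set W : Matrix (RIdx l r t × Fin r) (Fin n × Fin r) ℝ :=
        V ⊗ₖ (1 : Matrix (Fin r) (Fin r) ℝ) with hW
      set K : Matrix (RIdx l r t × Fin r) (RIdx l r t × Fin r) ℝ :=
        G ⊗ₖ (1 : Matrix (Fin r) (Fin r) ℝ) with hK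
      -- key Kronecker identities
      have hKform : K = 1 + (T ⊗ₖ (1 : Matrix (Fin r) (Fin r) ℝ)) *
          (T ⊗ₖ (1 : Matrix (Fin r) (Fin r) ℝ))ᵀ := by
        rw [hK, hG, Matrix.add_kronecker, Matrix.one_kronecker_one,
          ← Matrix.kroneckerMap_transpose, Matrix.transpose_one,
          ← Matrix.mul_kronecker_mul, Matrix.one_mul]
      have hGpd : G.PosDef := by
        have h := Matrix.posSemidef_self_mul_conjTranspose T
        rw [Matrix.conjTranspose_eq_transpose_of_trivial] at h
        exact Matrix.PosDef.add_posSemidef Matrix.PosDef.one h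
      have hKpd : K.PosDef := hKform ▸ posDef_one_add_mul_transpose _
      have hKinv : K⁻¹ = G⁻¹ ⊗ₖ (1 : Matrix (Fin r) (Fin r) ℝ) := by
        rw [hK, Matrix.inv_kronecker, inv_one]
      -- the Kronecker lift of the iterate
      have hXkron : (Vᵀ * G⁻¹ * V) ⊗ₖ (1 : Matrix (Fin r) (Fin r) ℝ) = Wᵀ * K⁻¹ * W := by
        rw [hKinv, hW, ← Matrix.kroneckerMap_transpose, Matrix.transpose_one,
          ← Matrix.mul_kronecker_mul, ← Matrix.mul_kronecker_mul, Matrix.one_mul, Matrix.one_mul]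
      set M : Matrix (RIdx l r t × Fin r) (RIdx l r t × Fin r) ℝ :=
        K + W * B * Bᵀ * Wᵀ with hM
      have hMpd : M.PosDef := by
        have h := Matrix.posSemidef_self_mul_conjTranspose (W * B)
        rw [Matrix.conjTranspose_eq_transpose_of_trivial, Matrix.transpose_mul] at h
        have h2 : W * B * (Bᵀ * Wᵀ) = W * B * Bᵀ * Wᵀ := by simp only [Matrix.mul_assoc]
        rw [h2] at h
        exact Matrix.PosDef.add_posSemidef hKpd h
      have hSpsd : (Wᵀ * K⁻¹ * W).PosSemidef := by
        have h := Matrix.PosSemidef.conjTranspose_mul_mul_same hKpd.inv.posSemidef W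
        rwa [Matrix.conjTranspose_eq_transpose_of_trivial] at h
      have hNdet : IsUnit (1 + B * Bᵀ * (Wᵀ * K⁻¹ * W)).det :=
        isUnit_det_one_add_mul_posSemidef B _ hSpsd
      -- compute the (t+1)-st block structures
      have hVsucc : Vseq A C (t + 1) = Matrix.fromRows C (W * A) := by
        rw [Vseq, ← hV, ← hW]
      have hTsucc : Tseq A B C (t + 1) = Matrix.fromBlocks
          (0 : Matrix (Fin l) (Fin m) ℝ) (0 : Matrix (Fin l) (CIdx m r t × Fin r) ℝ)
          (W * B) (T ⊗ₖ (1 : Matrix (Fin r) (Fin r) ℝ)) := by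
        rw [Tseq, ← hV, ← hT, ← hW]
      have hblock : (1 + Tseq A B C (t + 1) * (Tseq A B C (t + 1))ᵀ)
          = Matrix.fromBlocks 1 0 0 M := by
        rw [hTsucc, Matrix.fromBlocks_transpose, Matrix.fromBlocks_multiply]
        rw [← Matrix.fromBlocks_one, Matrix.fromBlocks_add]
        congr 1 <;> try simp
        rw [hM, hKform]
        rw [show W * B * (Bᵀ * Wᵀ) = W * B * Bᵀ * Wᵀ from by simp only [Matrix.mul_assoc]]
        abel
      have hblockinv : (Matrix.fromBlocks 1 0 0 M)⁻¹
          = Matrix.fromBlocks (1 : Matrix (Fin l) (Fin l) ℝ) 0 0 M⁻¹ := by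
        apply Matrix.inv_eq_right_inv
        rw [Matrix.fromBlocks_multiply]
        rw [Matrix.mul_nonsing_inv M hMpd.det_pos.ne'.isUnit]
        simp [Matrix.fromBlocks_one]
      rw [hblock, hblockinv, hVsucc, Dop, hXkron]
      rw [Matrix.transpose_fromRows, Matrix.fromCols_mul_fromBlocks,
        Matrix.fromCols_mul_fromRows]
      simp only [Matrix.mul_one, Matrix.mul_zero, Matrix.zero_mul, add_zero, zero_add]
      have hpt := pushthrough K W B hKpd.det_pos.ne'.isUnit hMpd.det_pos.ne'.isUnit hNdet
      rw [← hM] at hpt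
      have : Aᵀ * (Wᵀ * K⁻¹ * W) * (1 + B * Bᵀ * (Wᵀ * K⁻¹ * W))⁻¹ * A
          = (W * A)ᵀ * M⁻¹ * (W * A) := by
        rw [Matrix.transpose_mul]
        calc Aᵀ * (Wᵀ * K⁻¹ * W) * (1 + B * Bᵀ * (Wᵀ * K⁻¹ * W))⁻¹ * A
            = Aᵀ * (Wᵀ * K⁻¹ * W * (1 + B * Bᵀ * (Wᵀ * K⁻¹ * W))⁻¹) * A := by
              simp only [Matrix.mul_assoc]
          _ = Aᵀ * (Wᵀ * M⁻¹ * W) * A := by rw [hpt]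
          _ = Aᵀ * Wᵀ * M⁻¹ * (W * A) := by simp only [Matrix.mul_assoc]
      rw [this, add_comm]
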